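/- Euler addition differential relation in the rational-parametrization sense: let X(t) = a t^4 + 4b t^3 + 6c t^2 + 4d t + e and suppose x(τ), y(τ) are differentiable functions with X(x(τ)) > 0, X(y(τ)) > 0 satisfying x'(τ)/√(X(x(τ))) + y'(τ)/√(X(y(τ))) = 0 for all τ, with x(τ) ≠ y(τ). Then the function s(τ) = (1/4)((√(X(x)) − √(X(y)))/(x − y))^2 − (a/4)(x+y)^2 − b(x+y) − c is constant in τ. -/

import Mathlib

lemma euler_key (a b c d e u v u' v' p q : ℝ) (hp : 0 < p) (hq : 0 < q)
    (huv : u ≠ v)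
    (hp2 : p ^ 2 = a*u^4 + 4*b*u^3 + 6*c*u^2 + 4*d*u + e)
    (hq2 : q ^ 2 = a*v^4 + 4*b*v^3 + 6*c*v^2 + 4*d*v + e)
    (hode : u' / p + v' / q = 0) :
    1/4 * (2 * ((p - q)/(u - v)) ^ 1 *
      (((1/(2*p) * ((4*a*u^3 + 12*b*u^2 + 12*c*u + 4*d) * u')
        - 1/(2*q) * ((4*a*v^3 + 12*b*v^2 + 12*c*v + 4*d) * v')) * (u - v)
        - (p - q) * (u' - v')) / (u - v)^2))
    - a/4 * (2 * (u + v) ^ 1 * (u' + v')) - b * (u' + v') = 0 := by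
  have hp0 : p ≠ 0 := hp.ne'
  have hq0 : q ≠ 0 := hq.ne'
  have huv0 : u - v ≠ 0 := sub_ne_zero.mpr huv
  have hv' : v' = -(q * u') / p := by
    field_simp at hode ⊢
    linarith
  subst hv'
  field_simp
  ring_nf
  linear_combination 2*u'*(p-q)*(hq2 - hp2)

/-- Euler's algebraic integral `s` is a first integral of the differential relation
`x'/√X(x) + y'/√X(y) = 0`. -/
theorem stmt18 (a b c d e : ℝ) (x y : ℝ → ℝ)
    (hx : Differentiable ℝ x) (hy : Differentiable ℝ y)
    (hXx : ∀ τ, 0 < a * x τ ^ 4 + 4 * b * x τ ^ 3 + 6 * c * x τ ^ 2 + 4 * d * x τ + e)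
    (hXy : ∀ τ, 0 < a * y τ ^ 4 + 4 * b * y τ ^ 3 + 6 * c * y τ ^ 2 + 4 * d * y τ + e)
    (hne : ∀ τ, x τ ≠ y τ)
    (hode : ∀ τ,
      deriv x τ / Real.sqrt (a * x τ ^ 4 + 4 * b * x τ ^ 3 + 6 * c * x τ ^ 2 + 4 * d * x τ + e)
      + deriv y τ / Real.sqrt (a * y τ ^ 4 + 4 * b * y τ ^ 3 + 6 * c * y τ ^ 2 + 4 * d * y τ + e)
        = 0) :
    ∀ τ1 τ2 : ℝ,
      (fun τ => (1 / 4) *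
          ((Real.sqrt (a * x τ ^ 4 + 4 * b * x τ ^ 3 + 6 * c * x τ ^ 2 + 4 * d * x τ + e)
            - Real.sqrt (a * y τ ^ 4 + 4 * b * y τ ^ 3 + 6 * c * y τ ^ 2 + 4 * d * y τ + e))
            / (x τ - y τ)) ^ 2
          - (a / 4) * (x τ + y τ) ^ 2 - b * (x τ + y τ) - c) τ1
      = (fun τ => (1 / 4) *
          ((Real.sqrt (a * x τ ^ 4 + 4 * b * x τ ^ 3 + 6 * c * x τ ^ 2 + 4 * d * x τ + e)
            - Real.sqrt (a * y τ ^ 4 + 4 * b * y τ ^ 3 + 6 * c * y τ ^ 2 + 4 * d * y τ + e))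
            / (x τ - y τ)) ^ 2
          - (a / 4) * (x τ + y τ) ^ 2 - b * (x τ + y τ) - c) τ2 := by
  have hS : ∀ τ : ℝ, HasDerivAt (fun τ => (1 / 4) *
          ((Real.sqrt (a * x τ ^ 4 + 4 * b * x τ ^ 3 + 6 * c * x τ ^ 2 + 4 * d * x τ + e)
            - Real.sqrt (a * y τ ^ 4 + 4 * b * y τ ^ 3 + 6 * c * y τ ^ 2 + 4 * d * y τ + e))
            / (x τ - y τ)) ^ 2
          - (a / 4) * (x τ + y τ) ^ 2 - b * (x τ + y τ) - c) 0 τ := by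
    intro τ
    have hxd := (hx τ).hasDerivAt
    have hyd := (hy τ).hasDerivAt
    have hPx : HasDerivAt (fun t => a * x t ^ 4 + 4 * b * x t ^ 3 + 6 * c * x t ^ 2 + 4 * d * x t + e)
        ((4*a*(x τ)^3 + 12*b*(x τ)^2 + 12*c*(x τ) + 4*d) * deriv x τ) τ := by
      have h := ((((hxd.pow 4).const_mul a).add ((hxd.pow 3).const_mul (4*b))).add
        ((hxd.pow 2).const_mul (6*c))).add (hxd.const_mul (4*d)) |>.add_const e
      refine h.congr_deriv ?_
      push_cast
      ring
    have hPy : HasDerivAt (fun t => a * y t ^ 4 + 4 * b * y t ^ 3 + 6 * c * y t ^ 2 + 4 * d * y t + e)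
        ((4*a*(y τ)^3 + 12*b*(y τ)^2 + 12*c*(y τ) + 4*d) * deriv y τ) τ := by
      have h := ((((hyd.pow 4).const_mul a).add ((hyd.pow 3).const_mul (4*b))).add
        ((hyd.pow 2).const_mul (6*c))).add (hyd.const_mul (4*d)) |>.add_const e
      refine h.congr_deriv ?_
      push_cast
      ring
    have hsx : HasDerivAt (fun t => Real.sqrt (a * x t ^ 4 + 4 * b * x t ^ 3 + 6 * c * x t ^ 2 + 4 * d * x t + e))
        (1 / (2 * Real.sqrt (a * x τ ^ 4 + 4 * b * x τ ^ 3 + 6 * c * x τ ^ 2 + 4 * d * x τ + e)) *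
          ((4*a*(x τ)^3 + 12*b*(x τ)^2 + 12*c*(x τ) + 4*d) * deriv x τ)) τ :=
      (Real.hasDerivAt_sqrt (hXx τ).ne').comp τ hPx
    have hsy : HasDerivAt (fun t => Real.sqrt (a * y t ^ 4 + 4 * b * y t ^ 3 + 6 * c * y t ^ 2 + 4 * d * y t + e))
        (1 / (2 * Real.sqrt (a * y τ ^ 4 + 4 * b * y τ ^ 3 + 6 * c * y τ ^ 2 + 4 * d * y τ + e)) *
          ((4*a*(y τ)^3 + 12*b*(y τ)^2 + 12*c*(y τ) + 4*d) * deriv y τ)) τ :=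
      (Real.hasDerivAt_sqrt (hXy τ).ne').comp τ hPy
    have hw := (hsx.sub hsy).div (hxd.sub hyd) (sub_ne_zero.mpr (hne τ))
    have hD := (((hw.pow 2).const_mul (1/4 : ℝ)).sub
        (((hxd.add hyd).pow 2).const_mul (a/4))).sub ((hxd.add hyd).const_mul b) |>.sub_const c
    have hz := euler_key a b c d e (x τ) (y τ) (deriv x τ) (deriv y τ)
      (Real.sqrt (a * x τ ^ 4 + 4 * b * x τ ^ 3 + 6 * c * x τ ^ 2 + 4 * d * x τ + e))
      (Real.sqrt (a * y τ ^ 4 + 4 * b * y τ ^ 3 + 6 * c * y τ ^ 2 + 4 * d * y τ + e))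
      (Real.sqrt_pos.mpr (hXx τ)) (Real.sqrt_pos.mpr (hXy τ)) (hne τ)
      (Real.sq_sqrt (hXx τ).le) (Real.sq_sqrt (hXy τ).le) (hode τ)
    refine hD.congr_deriv ?_
    push_cast
    simp only [Pi.add_apply, Pi.sub_apply, Pi.div_apply]
    linear_combination hz
  exact is_const_of_deriv_eq_zero (fun τ => (hS τ).differentiableAt)
    (fun τ => (hS τ).deriv)
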